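/- Let A be a unital algebra with derivation D, let a, x ∈ A commute, and let g ∈ K[t] be a polynomial such that g(a) is invertible in A. Then D(g(a)^{-1}) = −g(a)^{-1}·D(g(a))·g(a)^{-1}, and x·D(f(a)·g(a)^{-1}) − x·(f'g − fg')(a)·g(a)^{-2}·D(a) lies in the commutator subspace [A,A] for every polynomial f ∈ K[t]. -/

import Mathlib

open Polynomial

def commSpanAux (K : Type*) (A : Type*) [Field K] [Ring A] [Algebra K A] :
    Submodule K A :=
  Submodule.span K {y : A | ∃ p q : A, y = p * q - q * p}

section Aux
variable {K : Type*} [Field K] {A : Type*} [Ring A] [Algebra K A]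

lemma aux_comm_mem (p q : A) : p * q - q * p ∈ commSpanAux K A :=
  Submodule.subset_span ⟨p, q, rfl⟩

lemma aux_central (r : K) (y : A) :
    y * algebraMap K A r = algebraMap K A r * y := (Algebra.commutes r y).symm

variable (D : A →ₗ[K] A) (hD : ∀ x y : A, D (x * y) = D x * y + x * D y)
include hD

lemma aux_D_one : D 1 = 0 := by
  have h := hD 1 1
  simp only [mul_one, one_mul] at h
  exact (left_eq_add.mp h)

lemma aux_D_algebraMap_mul (c : K) (y : A) :
    D (algebraMap K A c * y) = algebraMap K A c * D y := by
  rw [← Algebra.smul_def, map_smul, Algebra.smul_def]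

lemma aux_D_algebraMap (c : K) : D (algebraMap K A c) = 0 := by
  rw [← mul_one (algebraMap K A c), aux_D_algebraMap_mul D hD, aux_D_one D hD, mul_zero]

lemma aux_pow (a : A) : ∀ (n : ℕ) (x' : A), a * x' = x' * a →
    x' * D (a ^ (n + 1)) - algebraMap K A ((n : K) + 1) * (x' * a ^ n * D a) ∈
      commSpanAux K A := by
  intro n
  induction n with
  | zero =>
      intro x' _
      simp only [zero_add, pow_one, pow_zero, mul_one, Nat.cast_zero, map_one, one_mul]
      simp [sub_self]
  | succ n ih =>
      intro x' h
      have hA : x' * D a * a ^ (n + 1) - a ^ (n + 1) * (x' * D a) ∈ commSpanAux K A := by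
        have h0 := aux_comm_mem (A := A) (K := K) (x' * D a) (a ^ (n + 1))
        simpa [mul_assoc] using h0
      have hB : (x' * a) * D (a ^ (n + 1)) -
          algebraMap K A ((n : K) + 1) * ((x' * a) * a ^ n * D a) ∈ commSpanAux K A := by
        refine ih (x' * a) ?_
        rw [← mul_assoc, h]
      have hcomm : a ^ (n + 1) * x' = x' * a ^ (n + 1) := by
        have : Commute a x' := h
        exact (this.pow_left (n + 1)).eq
      have key : x' * D (a ^ (n + 1 + 1)) -
          algebraMap K A ((n : K) + 1 + 1) * (x' * a ^ (n + 1) * D a)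
          = (x' * D a * a ^ (n + 1) - a ^ (n + 1) * (x' * D a)) +
            ((x' * a) * D (a ^ (n + 1)) -
              algebraMap K A ((n : K) + 1) * ((x' * a) * a ^ n * D a)) := by
        have hp : (a : A) ^ (n + 1 + 1) = a * a ^ (n + 1) := by
          rw [pow_succ']
        have hc : (algebraMap K A) ((n : K) + 1 + 1)
            = algebraMap K A ((n : K) + 1) + 1 := by
          rw [map_add, map_one]
        have hpa : x' * a * a ^ n = x' * a ^ (n + 1) := by
          rw [mul_assoc, ← pow_succ']
        rw [hp, hD a (a ^ (n + 1)), hc, hpa, ← hcomm]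
        noncomm_ring
      have hgoal : ((n + 1 : ℕ) : K) + 1 = ((n : K) + 1) + 1 := by push_cast; ring
      rw [hgoal, key]
      exact Submodule.add_mem _ hA hB

lemma aux_poly (a : A) (f : Polynomial K) :
    ∀ x' : A, a * x' = x' * a →
    x' * D (aeval a f) - x' * aeval a (derivative f) * D a ∈ commSpanAux K A := by
  induction f using Polynomial.induction_on' with
  | add p q hp hq =>
      intro x' h
      have h1 := hp x' h
      have h2 := hq x' h
      have key : x' * D (aeval a (p + q)) - x' * aeval a (derivative (p + q)) * D a
          = (x' * D (aeval a p) - x' * aeval a (derivative p) * D a) +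
            (x' * D (aeval a q) - x' * aeval a (derivative q) * D a) := by
        simp only [map_add]
        noncomm_ring
      rw [key]
      exact Submodule.add_mem _ h1 h2
  | monomial n c =>
      intro x' h
      match n with
      | 0 =>
          have h0 : (monomial 0 c : Polynomial K) = C c := by
            simp [monomial_zero_left]
          rw [h0]
          simp only [derivative_C, map_zero, mul_zero, zero_mul, sub_zero, aeval_C]
          rw [aux_D_algebraMap D hD, mul_zero]
          exact Submodule.zero_mem _
      | m + 1 =>
          have hder : derivative (monomial (m+1) c) = monomial m (c * (m+1)) := by
            rw [derivative_monomial]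
            norm_num
          have haev : aeval a (monomial (m+1) c) = algebraMap K A c * a ^ (m+1) := by
            rw [aeval_monomial]
          have haev2 : aeval a (monomial m (c * (m+1))) =
              algebraMap K A c * (algebraMap K A ((m : K)+1) * a ^ m) := by
            rw [aeval_monomial, map_mul, mul_assoc]
          set Mc := algebraMap K A c with hMc
          set Mm := algebraMap K A ((m : K) + 1) with hMm
          have hc1 : x' * (Mc * D (a ^ (m+1)))
              = Mc * (x' * D (a ^ (m+1))) := by
            rw [← mul_assoc, hMc, aux_central c x', mul_assoc]
          have hc2 : x' * (Mc * (Mm * a ^ m)) * D a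
              = Mc * (Mm * (x' * a ^ m * D a)) := by
            calc x' * (Mc * (Mm * a ^ m)) * D a
                = (x' * Mc) * Mm * a ^ m * D a := by noncomm_ring
              _ = (Mc * x') * Mm * a ^ m * D a := by rw [hMc, aux_central c x']
              _ = Mc * (x' * Mm) * a ^ m * D a := by noncomm_ring
              _ = Mc * (Mm * x') * a ^ m * D a := by rw [hMm, aux_central ((m : K)+1) x']
              _ = Mc * (Mm * (x' * a ^ m * D a)) := by noncomm_ring
          have key : x' * D (aeval a (monomial (m+1) c)) -
              x' * aeval a (derivative (monomial (m+1) c)) * D a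
              = Mc *
                (x' * D (a ^ (m+1)) - Mm * (x' * a ^ m * D a)) := by
            rw [hder, haev, haev2, aux_D_algebraMap_mul D hD, hc1, hc2, mul_sub]
          rw [key, hMc, ← Algebra.smul_def]
          exact Submodule.smul_mem _ c (aux_pow D hD a m x' h)
end Aux

section Aux2
variable {K : Type*} [Field K] {A : Type*} [Ring A] [Algebra K A]

lemma aux_commute_aeval (a y : A) (h : Commute y a) (p : Polynomial K) :
    Commute y (aeval a p) := by
  induction p using Polynomial.induction_on' with
  | add p q hp hq => simpa [map_add] using hp.add_right hq
  | monomial n c =>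
      rw [aeval_monomial]
      have h0 : Commute y ((algebraMap K A) c) := (Algebra.commutes c y).symm
      exact h0.mul_right (h.pow_right n)
end Aux2

/-- Let D be a derivation of a unital algebra A over a field K of
characteristic 0, let a, x ∈ A commute, and let f, g ∈ K[t] with g(a)
invertible in A. Then D(g(a)⁻¹) = −g(a)⁻¹·D(g(a))·g(a)⁻¹ and
x·D(f(a)·g(a)⁻¹) − x·(f'g − fg')(a)·g(a)⁻²·D(a) ∈ [A,A]. -/
theorem deriv_inverse_and_quotient_rule_mem_commutatorSubspace
    (K : Type*) [Field K] [CharZero K] (A : Type*) [Ring A] [Algebra K A]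
    (D : A →ₗ[K] A) (hD : ∀ x y : A, D (x * y) = D x * y + x * D y)
    (a x : A) (hax : a * x = x * a) (f g : Polynomial K)
    (hg : IsUnit (Polynomial.aeval a g)) :
    D (Ring.inverse (Polynomial.aeval a g)) =
      -(Ring.inverse (Polynomial.aeval a g) * D (Polynomial.aeval a g) *
        Ring.inverse (Polynomial.aeval a g)) ∧
    x * D (Polynomial.aeval a f * Ring.inverse (Polynomial.aeval a g)) -
      x * Polynomial.aeval a
            (Polynomial.derivative f * g - f * Polynomial.derivative g) *
        (Ring.inverse (Polynomial.aeval a g)) ^ 2 * D a ∈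
      Submodule.span K {y : A | ∃ p q : A, y = p * q - q * p} := by
  set F := aeval a f with hF
  set G := aeval a g with hG
  set F' := aeval a (derivative f) with hF'
  set G' := aeval a (derivative g) with hG'
  set v := Ring.inverse G with hv
  have hGv : G * v = 1 := Ring.mul_inverse_cancel G hg
  have hvG : v * G = 1 := Ring.inverse_mul_cancel G hg
  have hD1 : D 1 = 0 := aux_D_one D hD
  have h1 : D G * v + G * D v = 0 := by
    have h := hD G v
    rw [hGv, hD1] at h
    exact h.symm
  have part1 : D v = -(v * D G * v) := by
    have h2 : G * D v = -(D G * v) := by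
      rw [add_comm] at h1
      exact eq_neg_of_add_eq_zero_left h1
    calc D v = v * (G * D v) := by rw [← mul_assoc, hvG, one_mul]
      _ = v * -(D G * v) := by rw [h2]
      _ = -(v * D G * v) := by rw [mul_neg, mul_assoc]
  refine ⟨part1, ?_⟩
  -- commutation facts
  have hcxa : Commute x a := hax.symm
  have hcaG : Commute a G := aux_commute_aeval a a (Commute.refl a) g
  have hcxG : Commute x G := aux_commute_aeval a x hcxa g
  have hcFa : Commute F a := (aux_commute_aeval a a (Commute.refl a) f).symm
  have hcF'a : Commute F' a := (aux_commute_aeval a a (Commute.refl a) (derivative f)).symm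
  have hcG'a : Commute G' a := (aux_commute_aeval a a (Commute.refl a) (derivative g)).symm
  have hcFG : Commute F G := aux_commute_aeval a F hcFa g
  have hcF'G : Commute F' G := aux_commute_aeval a F' hcF'a g
  have hcG'G : Commute G' G := aux_commute_aeval a G' hcG'a g
  have hcv : ∀ y : A, Commute y G → Commute y v := by
    intro y hy
    show y * v = v * y
    have : v * y = y * v := by
      calc v * y = (v * y) * (G * v) := by rw [hGv, mul_one]
        _ = v * (y * G) * v := by noncomm_ring
        _ = v * (G * y) * v := by rw [hy.eq]
        _ = (v * G) * (y * v) := by noncomm_ring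
        _ = y * v := by rw [hvG, one_mul]
    exact this.symm
  have hcav : Commute a v := hcv a hcaG
  have hcxv : Commute x v := hcv x hcxG
  have hcFv : Commute F v := hcv F hcFG
  have hcF'v : Commute F' v := hcv F' hcF'G
  have hcG'v : Commute G' v := hcv G' hcG'G
  have hcxF : Commute x F := aux_commute_aeval a x hcxa f
  -- membership facts
  have mem1 : (x * D F) * v - v * (x * D F) ∈ commSpanAux K A := aux_comm_mem _ _
  have mem2 : (v * x) * D F - (v * x) * F' * D a ∈ commSpanAux K A := by
    refine aux_poly D hD a f (v * x) ?_
    exact (hcav.mul_right hcxa.symm).eq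
  have mem3 : (x * F * v * D G) * v - v * (x * F * v * D G) ∈ commSpanAux K A :=
    aux_comm_mem _ _
  have mem4 : (v * (x * F * v)) * D G - (v * (x * F * v)) * G' * D a ∈
      commSpanAux K A := by
    refine aux_poly D hD a g (v * (x * F * v)) ?_
    exact (hcav.mul_right ((hcxa.symm.mul_right hcFa.symm).mul_right hcav)).eq
  -- rearrangement identities
  have e1 : x * F' * G * v ^ 2 * D a = v * x * F' * D a := by
    calc x * F' * G * v ^ 2 * D a
        = x * F' * (G * v) * (v * D a) := by noncomm_ring
      _ = x * (F' * v) * D a := by rw [hGv]; noncomm_ring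
      _ = x * (v * F') * D a := by rw [hcF'v.eq]
      _ = (x * v) * (F' * D a) := by noncomm_ring
      _ = (v * x) * (F' * D a) := by rw [hcxv.eq]
      _ = v * x * F' * D a := by noncomm_ring
  have e2 : x * F * G' * v ^ 2 * D a = v * (x * F * v) * G' * D a := by
    calc x * F * G' * v ^ 2 * D a
        = x * F * (G' * v) * (v * D a) := by noncomm_ring
      _ = x * F * (v * G') * (v * D a) := by rw [hcG'v.eq]
      _ = x * (F * v) * ((G' * v) * D a) := by noncomm_ring
      _ = x * (v * F) * ((v * G') * D a) := by rw [hcFv.eq, hcG'v.eq]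
      _ = (x * v) * (F * (v * (G' * D a))) := by noncomm_ring
      _ = (v * x) * (F * (v * (G' * D a))) := by rw [hcxv.eq]
      _ = v * (x * F * v) * G' * D a := by noncomm_ring
  have hsplit : aeval a (derivative f * g - f * derivative g) = F' * G - F * G' := by
    rw [map_sub, map_mul, map_mul, ← hF, ← hG, ← hF', ← hG']
  have master : x * D (F * v) - x * (F' * G - F * G') * v ^ 2 * D a
      = (((x * D F) * v - v * (x * D F)) + ((v * x) * D F - (v * x) * F' * D a))
        - (((x * F * v * D G) * v - v * (x * F * v * D G)) +
           ((v * (x * F * v)) * D G - (v * (x * F * v)) * G' * D a)) := by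
    rw [hD F v, part1]
    calc x * (D F * v + F * -(v * D G * v)) - x * (F' * G - F * G') * v ^ 2 * D a
        = (x * D F * v - x * F * v * D G * v)
          - x * F' * G * v ^ 2 * D a + x * F * G' * v ^ 2 * D a := by noncomm_ring
      _ = (x * D F * v - x * F * v * D G * v)
          - v * x * F' * D a + v * (x * F * v) * G' * D a := by rw [e1, e2]
      _ = (((x * D F) * v - v * (x * D F)) + ((v * x) * D F - (v * x) * F' * D a))
          - (((x * F * v * D G) * v - v * (x * F * v * D G)) +
             ((v * (x * F * v)) * D G - (v * (x * F * v)) * G' * D a)) := by noncomm_ring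
  show x * D (F * v) - x * aeval a (derivative f * g - f * derivative g) * v ^ 2 * D a
      ∈ commSpanAux K A
  rw [hsplit, master]
  exact Submodule.sub_mem _ (Submodule.add_mem _ mem1 mem2) (Submodule.add_mem _ mem3 mem4)
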